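/- Suppose there exists γ* ∈ Γ₁ with A[γ*] ≻ 0 and Γ° is facially exposed (every face of Γ° is of the form Γ° ∩ w^⊥ for some w ∈ Γ). Then for every (x,t) ∈ S_SDP, R'(x,t) = R(x,t). -/

import Mathlib

noncomputable section
open Matrix Set

/-- Dot-product style inner product on `ℝ × (Fin m → ℝ)` (i.e. `ℝ^{1+m}`). -/
def ipr {m : ℕ} (v w : ℝ × (Fin m → ℝ)) : ℝ := v.1 * w.1 + v.2 ⬝ᵥ w.2

/-- `A(γ₀, γ) = γ₀ A₀ + ∑ i, γ i • A i`. -/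
def Amix {ι : Type*} [Fintype ι] {m : ℕ} (A0 : Matrix ι ι ℝ)
    (A : Fin m → Matrix ι ι ℝ) (g0 : ℝ) (g : Fin m → ℝ) : Matrix ι ι ℝ :=
  g0 • A0 + ∑ i, g i • A i

/-- `b(γ) = b₀ + ∑ i, γ i • b i` (the `γ₀ = 1` slice). -/
def bmix {ι : Type*} {m : ℕ} (b0 : ι → ℝ) (b : Fin m → ι → ℝ) (g : Fin m → ℝ) : ι → ℝ :=
  b0 + ∑ i, g i • b i

/-- The cone of convex Lagrange multipliers `Γ`. -/
def Gamma {ι : Type*} [Fintype ι] {m : ℕ} (A0 : Matrix ι ι ℝ)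
    (A : Fin m → Matrix ι ι ℝ) : Set (ℝ × (Fin m → ℝ)) :=
  {p | 0 ≤ p.1 ∧ (∀ i, 0 ≤ p.2 i) ∧ (Amix A0 A p.1 p.2).PosSemidef}

/-- The slice `Γ₁` of `Γ` at `γ₀ = 1`. -/
def Gamma1 {ι : Type*} [Fintype ι] {m : ℕ} (A0 : Matrix ι ι ℝ)
    (A : Fin m → Matrix ι ι ℝ) : Set (Fin m → ℝ) :=
  {g | (∀ i, 0 ≤ g i) ∧ (Amix A0 A 1 g).PosSemidef}

/-- Polar cone with respect to `ipr`. -/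
def polarCone {m : ℕ} (S : Set (ℝ × (Fin m → ℝ))) : Set (ℝ × (Fin m → ℝ)) :=
  {v | ∀ w ∈ S, ipr v w ≤ 0}

/-- The quadratic function `x ↦ xᵀ M x + 2 bᵀ x + c`. -/
def quadF {ι : Type*} [Fintype ι] (M : Matrix ι ι ℝ) (b : ι → ℝ) (c : ℝ) (x : ι → ℝ) : ℝ :=
  x ⬝ᵥ M.mulVec x + 2 * (b ⬝ᵥ x) + c

/-- The vector `q(x) = (q₀(x), q₁(x), …, q_m(x)) ∈ ℝ^{1+m}`. -/
def qVec {ι : Type*} [Fintype ι] {m : ℕ} (A0 : Matrix ι ι ℝ) (b0 : ι → ℝ) (c0 : ℝ)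
    (A : Fin m → Matrix ι ι ℝ) (b : Fin m → ι → ℝ) (c : Fin m → ℝ)
    (x : ι → ℝ) : ℝ × (Fin m → ℝ) :=
  (quadF A0 b0 c0 x, fun i => quadF (A i) (b i) (c i) x)

/-- The first unit vector `e₀ ∈ ℝ^{1+m}`. -/
def e0 {m : ℕ} : ℝ × (Fin m → ℝ) := (1, 0)

/-- `[γ, q(x)] = q₀(x) + ∑ i, γ i * q i (x)`. -/
def brkt {ι : Type*} [Fintype ι] {m : ℕ} (A0 : Matrix ι ι ℝ) (b0 : ι → ℝ) (c0 : ℝ)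
    (A : Fin m → Matrix ι ι ℝ) (b : Fin m → ι → ℝ) (c : Fin m → ℝ)
    (g : Fin m → ℝ) (x : ι → ℝ) : ℝ :=
  quadF A0 b0 c0 x + ∑ i, g i * quadF (A i) (b i) (c i) x

/-- The projected SDP relaxation `S_SDP = {(x,t) : q(x) - 2t e₀ ∈ Γ°}`. -/
def SSDP {ι : Type*} [Fintype ι] {m : ℕ} (A0 : Matrix ι ι ℝ) (b0 : ι → ℝ) (c0 : ℝ)
    (A : Fin m → Matrix ι ι ℝ) (b : Fin m → ι → ℝ) (c : Fin m → ℝ) :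
    Set ((ι → ℝ) × ℝ) :=
  {p | qVec A0 b0 c0 A b c p.1 - (2 * p.2) • e0 ∈ polarCone (Gamma A0 A)}

/-- The QCQP epigraph `S = {(x,t) : q₀(x) ≤ 2t, q i (x) ≤ 0 ∀ i}`. -/
def Sepi {ι : Type*} [Fintype ι] {m : ℕ} (A0 : Matrix ι ι ℝ) (b0 : ι → ℝ) (c0 : ℝ)
    (A : Fin m → Matrix ι ι ℝ) (b : Fin m → ι → ℝ) (c : Fin m → ℝ) :
    Set ((ι → ℝ) × ℝ) :=
  {p | quadF A0 b0 c0 p.1 ≤ 2 * p.2 ∧ ∀ i, quadF (A i) (b i) (c i) p.1 ≤ 0}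

/-- `F` is a face of the convex cone `K`. -/
def IsFaceOf {E : Type*} [Add E] (K F : Set E) : Prop :=
  F ⊆ K ∧ ∀ y ∈ K, ∀ z ∈ K, y + z ∈ F → y ∈ F ∧ z ∈ F

/-- `G` is the minimal face of `K` containing `v`. -/
def IsMinFace {E : Type*} [Add E] (K : Set E) (v : E) (G : Set E) : Prop :=
  IsFaceOf K G ∧ v ∈ G ∧ ∀ G', IsFaceOf K G' → v ∈ G' → G ⊆ G'

/-- The set of rounding directions `R(x,t)` at a point `p` of a convex set `C`. -/
def Rset {E : Type*} [AddCommGroup E] [Module ℝ E] (C : Set E) (p : E) : Set E :=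
  {d | ∃ ε : ℝ, 0 < ε ∧ ∀ s ∈ Set.Icc (-ε) ε, p + s • d ∈ C}

/-- The first-order rounding directions `R'(x,t)`, relative to a face `G` of `Γ°`. -/
def Rset' {ι : Type*} [Fintype ι] {m : ℕ} (A0 : Matrix ι ι ℝ) (b0 : ι → ℝ) (c0 : ℝ)
    (A : Fin m → Matrix ι ι ℝ) (b : Fin m → ι → ℝ) (c : Fin m → ℝ)
    (x : ι → ℝ) (t : ℝ) (G : Set (ℝ × (Fin m → ℝ))) : Set ((ι → ℝ) × ℝ) :=
  {d | ∀ α : ℝ,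
    qVec A0 b0 c0 A b c (x + α • d.1) - (2 * (t + α * d.2)) • e0 ∈ Submodule.span ℝ G}

/-- Orthogonal complement (as a set) of a subset of `ℝ^{1+m}` w.r.t. `ipr`. -/
def orthC {m : ℕ} (G : Set (ℝ × (Fin m → ℝ))) : Set (ℝ × (Fin m → ℝ)) :=
  {v | ∀ w ∈ G, ipr v w = 0}

/- ### Auxiliary lemmas -/

lemma ipr_add_left {m : ℕ} (a b u : ℝ × (Fin m → ℝ)) : ipr (a + b) u = ipr a u + ipr b u := by
  simp [ipr, add_dotProduct]; ring

lemma ipr_smul_left {m : ℕ} (c : ℝ) (a u : ℝ × (Fin m → ℝ)) : ipr (c • a) u = c * ipr a u := by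
  simp [ipr, smul_dotProduct, smul_eq_mul]; ring

lemma ipr_zero_left {m : ℕ} (u : ℝ × (Fin m → ℝ)) : ipr 0 u = 0 := by
  simp [ipr]

lemma ipr_neg_left {m : ℕ} (a u : ℝ × (Fin m → ℝ)) : ipr (-a) u = -ipr a u := by
  have := ipr_smul_left (m := m) (-1) a u
  simpa using this

lemma mem_polar_add {m : ℕ} {S : Set (ℝ × (Fin m → ℝ))} {a b : ℝ × (Fin m → ℝ)}
    (ha : a ∈ polarCone S) (hb : b ∈ polarCone S) : a + b ∈ polarCone S := by
  intro w hw
  rw [ipr_add_left]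
  linarith [ha w hw, hb w hw]

lemma mem_polar_smul {m : ℕ} {S : Set (ℝ × (Fin m → ℝ))} {a : ℝ × (Fin m → ℝ)} {c : ℝ}
    (hc : 0 ≤ c) (ha : a ∈ polarCone S) : c • a ∈ polarCone S := by
  intro w hw
  rw [ipr_smul_left]
  exact mul_nonpos_iff.2 (Or.inl ⟨hc, ha w hw⟩)

lemma mem_polar_zero {m : ℕ} {S : Set (ℝ × (Fin m → ℝ))} : (0 : ℝ × (Fin m → ℝ)) ∈ polarCone S := by
  intro w hw
  simp [ipr_zero_left]

lemma sumMulVec {ι κ : Type*} [Fintype ι] [Fintype κ] (s : Finset κ) (M : κ → Matrix ι ι ℝ)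
    (y : ι → ℝ) : (∑ i ∈ s, M i) *ᵥ y = ∑ i ∈ s, M i *ᵥ y := by
  ext j
  simp [Matrix.mulVec, dotProduct, Matrix.sum_apply, Finset.sum_mul]
  rw [Finset.sum_comm]

lemma quad_Amix {ι : Type*} [Fintype ι] {m : ℕ} (A0 : Matrix ι ι ℝ)
    (A : Fin m → Matrix ι ι ℝ) (g0 : ℝ) (g : Fin m → ℝ) (y : ι → ℝ) :
    y ⬝ᵥ (Amix A0 A g0 g) *ᵥ y = g0 * (y ⬝ᵥ A0 *ᵥ y) + ∑ i, g i * (y ⬝ᵥ (A i) *ᵥ y) := by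
  simp only [Amix, Matrix.add_mulVec, sumMulVec, Matrix.smul_mulVec, dotProduct_add,
    dotProduct_smul, smul_eq_mul]
  congr 1
  simp only [dotProduct, Finset.sum_apply, Pi.smul_apply, smul_eq_mul, Finset.mul_sum,
    Finset.sum_mul]
  rw [Finset.sum_comm]
  exact Finset.sum_congr rfl fun i _ => Finset.sum_congr rfl fun j _ => by ring

lemma quadF_expand {ι : Type*} [Fintype ι] (M : Matrix ι ι ℝ) (hM : M.IsSymm) (b : ι → ℝ) (c : ℝ)
    (x y : ι → ℝ) (α : ℝ) :
    quadF M b c (x + α • y) = quadF M b c x + α * (2 * ((M *ᵥ x + b) ⬝ᵥ y)) + α^2 * (y ⬝ᵥ M *ᵥ y) := by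
  have hsym : y ⬝ᵥ M *ᵥ x = x ⬝ᵥ M *ᵥ y := by
    rw [Matrix.dotProduct_mulVec, ← Matrix.mulVec_transpose, hM.eq, dotProduct_comm]
  simp only [quadF, Matrix.mulVec_add, Matrix.mulVec_smul, dotProduct_add, add_dotProduct,
    dotProduct_smul, smul_dotProduct, smul_eq_mul, hsym]
  rw [show M *ᵥ x ⬝ᵥ y = x ⬝ᵥ M *ᵥ y from by rw [dotProduct_comm, hsym]]
  ring

/-- The key quadratic expansion of `q(x + α d₁) - 2(t + α d₂) e₀`. -/
lemma key_expand {n m : ℕ} (A0 : Matrix (Fin n) (Fin n) ℝ) (b0 : Fin n → ℝ) (c0 : ℝ)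
    (A : Fin m → Matrix (Fin n) (Fin n) ℝ) (b : Fin m → Fin n → ℝ) (c : Fin m → ℝ)
    (hA0 : A0.IsSymm) (hA : ∀ i, (A i).IsSymm)
    (x : Fin n → ℝ) (t : ℝ) (d : (Fin n → ℝ) × ℝ) (α : ℝ) :
    qVec A0 b0 c0 A b c (x + α • d.1) - (2 * (t + α * d.2)) • e0
      = (qVec A0 b0 c0 A b c x - (2 * t) • e0)
        + α • ((2 * ((A0 *ᵥ x + b0) ⬝ᵥ d.1) - 2 * d.2,
            fun i => 2 * (((A i) *ᵥ x + b i) ⬝ᵥ d.1)) : ℝ × (Fin m → ℝ))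
        + α^2 • ((d.1 ⬝ᵥ A0 *ᵥ d.1, fun i => d.1 ⬝ᵥ (A i) *ᵥ d.1) : ℝ × (Fin m → ℝ)) := by
  refine Prod.ext ?_ ?_
  · simp only [qVec, e0, Prod.fst_sub, Prod.fst_add, Prod.smul_fst, smul_eq_mul,
      quadF_expand A0 hA0 b0 c0 x d.1 α]
    ring
  · funext i
    simp only [qVec, e0, Prod.snd_sub, Prod.snd_add, Prod.smul_snd, Pi.sub_apply, Pi.add_apply,
      Pi.smul_apply, smul_eq_mul, Pi.zero_apply, quadF_expand (A i) (hA i) (b i) (c i) x d.1 α]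
    ring

/-- under facial exposedness of `Γ°`, `R'(x,t) = R(x,t)`. -/
theorem stmt10 {n m : ℕ} (A0 : Matrix (Fin n) (Fin n) ℝ) (b0 : Fin n → ℝ) (c0 : ℝ)
    (A : Fin m → Matrix (Fin n) (Fin n) ℝ) (b : Fin m → Fin n → ℝ) (c : Fin m → ℝ)
    (hA0 : A0.IsSymm) (hA : ∀ i, (A i).IsSymm)
    (hdef : ∃ g ∈ Gamma1 A0 A, (Amix A0 A 1 g).PosDef)
    (hexp : ∀ G : Set (ℝ × (Fin m → ℝ)), IsFaceOf (polarCone (Gamma A0 A)) G →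
      ∃ w ∈ Gamma A0 A, G = polarCone (Gamma A0 A) ∩ {v | ipr v w = 0}) :
    ∀ p ∈ SSDP A0 b0 c0 A b c, ∀ G : Set (ℝ × (Fin m → ℝ)),
      IsMinFace (polarCone (Gamma A0 A))
        (qVec A0 b0 c0 A b c p.1 - (2 * p.2) • e0) G →
      Rset' A0 b0 c0 A b c p.1 p.2 G = Rset (SSDP A0 b0 c0 A b c) p := by
  intro p hp G hG
  classical
  obtain ⟨w0, hw0Γ, hGw⟩ := hexp G hG.1
  set v0 : ℝ × (Fin m → ℝ) := qVec A0 b0 c0 A b c p.1 - (2 * p.2) • e0 with hv0def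
  have hv0K : v0 ∈ polarCone (Gamma A0 A) := hp
  have hv0G : v0 ∈ G := hG.2.1
  have hv0w0 : ipr v0 w0 = 0 := (hGw ▸ hv0G).2
  -- G is a convex cone
  have hGsubK : G ⊆ polarCone (Gamma A0 A) := hG.1.1
  have hG0 : (0 : ℝ × (Fin m → ℝ)) ∈ G := by
    rw [hGw]; exact ⟨mem_polar_zero, ipr_zero_left w0⟩
  have hGadd : ∀ a ∈ G, ∀ b' ∈ G, a + b' ∈ G := by
    intro a ha b' hb'
    rw [hGw] at ha hb' ⊢
    have ha2 : ipr a w0 = 0 := ha.2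
    have hb2 : ipr b' w0 = 0 := hb'.2
    exact ⟨mem_polar_add ha.1 hb'.1, show ipr (a + b') w0 = 0 by
      rw [ipr_add_left, ha2, hb2]; ring⟩
  have hGsmul : ∀ (r : ℝ), 0 ≤ r → ∀ a ∈ G, r • a ∈ G := by
    intro r hr a ha
    rw [hGw] at ha ⊢
    have ha2 : ipr a w0 = 0 := ha.2
    exact ⟨mem_polar_smul hr ha.1, show ipr (r • a) w0 = 0 by
      rw [ipr_smul_left, ha2]; ring⟩
  -- span G = G - G
  have hspan : ∀ z ∈ Submodule.span ℝ G, ∃ a ∈ G, ∃ b' ∈ G, z = a - b' := by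
    intro z hz
    induction hz using Submodule.span_induction with
    | mem x hx => exact ⟨x, hx, 0, hG0, by abel⟩
    | zero => exact ⟨0, hG0, 0, hG0, by abel⟩
    | add x y hx hy ihx ihy =>
      obtain ⟨a1, ha1, b1, hb1, rfl⟩ := ihx
      obtain ⟨a2, ha2, b2, hb2, rfl⟩ := ihy
      exact ⟨a1 + a2, hGadd _ ha1 _ ha2, b1 + b2, hGadd _ hb1 _ hb2, by abel⟩
    | smul r x hx ihx =>
      obtain ⟨a1, ha1, b1, hb1, rfl⟩ := ihx
      rcases le_or_gt 0 r with hr | hr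
      · exact ⟨r • a1, hGsmul r hr _ ha1, r • b1, hGsmul r hr _ hb1, by
          rw [smul_sub]⟩
      · refine ⟨(-r) • b1, hGsmul (-r) (by linarith) _ hb1, (-r) • a1,
          hGsmul (-r) (by linarith) _ ha1, ?_⟩
        rw [smul_sub]; module
  -- the minimal face is contained in the "radial" face at v0
  have hGsubF : ∀ g ∈ G, ∃ δ : ℝ, 0 < δ ∧ v0 - δ • g ∈ polarCone (Gamma A0 A) := by
    have hFace : IsFaceOf (polarCone (Gamma A0 A))
        {z | z ∈ polarCone (Gamma A0 A) ∧ ∃ δ : ℝ, 0 < δ ∧ v0 - δ • z ∈ polarCone (Gamma A0 A)} := by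
      constructor
      · intro z hz; exact hz.1
      · intro y hy z hz hyz
        obtain ⟨_, δ, hδ, hδK⟩ := hyz
        constructor
        · refine ⟨hy, δ, hδ, ?_⟩
          have : v0 - δ • y = (v0 - δ • (y + z)) + δ • z := by module
          rw [this]
          exact mem_polar_add hδK (mem_polar_smul hδ.le hz)
        · refine ⟨hz, δ, hδ, ?_⟩
          have : v0 - δ • z = (v0 - δ • (y + z)) + δ • y := by module
          rw [this]
          exact mem_polar_add hδK (mem_polar_smul hδ.le hy)
    have hv0F : v0 ∈ {z | z ∈ polarCone (Gamma A0 A) ∧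
        ∃ δ : ℝ, 0 < δ ∧ v0 - δ • z ∈ polarCone (Gamma A0 A)} := by
      refine ⟨hv0K, 1/2, by norm_num, ?_⟩
      have : v0 - (1/2 : ℝ) • v0 = (1/2 : ℝ) • v0 := by module
      rw [this]
      exact mem_polar_smul (by norm_num) hv0K
    intro g hg
    exact (hG.2.2 _ hFace hv0F hg).2
  ext d
  -- abbreviations U, W
  set U : ℝ × (Fin m → ℝ) := (2 * ((A0 *ᵥ p.1 + b0) ⬝ᵥ d.1) - 2 * d.2,
    fun i => 2 * (((A i) *ᵥ p.1 + b i) ⬝ᵥ d.1)) with hUdef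
  set W : ℝ × (Fin m → ℝ) := (d.1 ⬝ᵥ A0 *ᵥ d.1, fun i => d.1 ⬝ᵥ (A i) *ᵥ d.1) with hWdef
  have hkey : ∀ α : ℝ, qVec A0 b0 c0 A b c (p.1 + α • d.1) - (2 * (p.2 + α * d.2)) • e0
      = v0 + α • U + α^2 • W := fun α => key_expand A0 b0 c0 A b c hA0 hA p.1 p.2 d α
  -- sign of W against Γ
  have hWpos : ∀ γ ∈ Gamma A0 A, 0 ≤ ipr W γ := by
    intro γ hγ
    have h : 0 ≤ d.1 ⬝ᵥ (Amix A0 A γ.1 γ.2) *ᵥ d.1 := hγ.2.2.re_dotProduct_nonneg d.1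
    rw [quad_Amix] at h
    have hipr : ipr W γ = γ.1 * (d.1 ⬝ᵥ A0 *ᵥ d.1) + ∑ i, γ.2 i * (d.1 ⬝ᵥ (A i) *ᵥ d.1) := by
      simp only [ipr, hWdef, dotProduct]
      rw [mul_comm]
      congr 1
      exact Finset.sum_congr rfl fun i _ => mul_comm _ _
    rw [hipr]
    exact h
  have hnegWK : -W ∈ polarCone (Gamma A0 A) := by
    intro γ hγ
    rw [ipr_neg_left]
    linarith [hWpos γ hγ]
  constructor
  · -- R' ⊆ R
    intro hd
    have hv0S : v0 ∈ Submodule.span ℝ G := Submodule.subset_span hv0G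
    have h1 : v0 + U + W ∈ Submodule.span ℝ G := by
      have := hd 1
      rw [hkey 1] at this
      simpa using this
    have h2 : v0 + (-1 : ℝ) • U + W ∈ Submodule.span ℝ G := by
      have := hd (-1)
      rw [hkey (-1)] at this
      have h : ((-1 : ℝ))^2 • W = W := by norm_num
      rw [h] at this
      exact this
    have hUS : U ∈ Submodule.span ℝ G := by
      have heq : U = (1/2 : ℝ) • ((v0 + U + W) - (v0 + (-1 : ℝ) • U + W)) := by module
      rw [heq]
      exact Submodule.smul_mem _ _ (Submodule.sub_mem _ h1 h2)
    have hWS : W ∈ Submodule.span ℝ G := by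
      have heq : W = ((1/2 : ℝ) • ((v0 + U + W) + (v0 + (-1 : ℝ) • U + W))) - v0 := by module
      rw [heq]
      exact Submodule.sub_mem _ (Submodule.smul_mem _ _ (Submodule.add_mem _ h1 h2)) hv0S
    obtain ⟨u1, hu1, u2, hu2, hUeq⟩ := hspan U hUS
    obtain ⟨w1, hw1, w2, hw2, hWeq⟩ := hspan W hWS
    obtain ⟨δu, hδu, hδuK⟩ := hGsubF (u1 + u2) (hGadd _ hu1 _ hu2)
    obtain ⟨δw, hδw, hδwK⟩ := hGsubF (w1 + w2) (hGadd _ hw1 _ hw2)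
    -- the main perturbation step
    have step : ∀ (δ : ℝ), 0 < δ → ∀ g1 ∈ G, ∀ g2 ∈ G,
        v0 - δ • (g1 + g2) ∈ polarCone (Gamma A0 A) → ∀ r : ℝ, |r| ≤ δ →
        v0 + r • (g1 - g2) ∈ polarCone (Gamma A0 A) := by
      intro δ hδ g1 hg1 g2 hg2 hK r hr
      have hδne : δ ≠ 0 := ne_of_gt hδ
      have hid : v0 + r • (g1 - g2) = (1 - |r|/δ) • v0 +
          ((|r|/δ) • (v0 - δ • (g1 + g2)) + ((|r| + r) • g1 + (|r| - r) • g2)) := by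
        match_scalars <;> field_simp <;> ring
      rw [hid]
      have h1 : 0 ≤ 1 - |r|/δ := by
        rw [sub_nonneg, div_le_one hδ]; exact hr
      have hrabs := abs_nonneg r
      have hra := neg_abs_le r
      have hrb := le_abs_self r
      exact mem_polar_add (mem_polar_smul h1 hv0K)
        (mem_polar_add (mem_polar_smul (by positivity) hK)
          (mem_polar_add (mem_polar_smul (by linarith) (hGsubK hg1))
            (mem_polar_smul (by linarith) (hGsubK hg2))))
    set ε : ℝ := min (min (δu/2) (δw/2)) 1 with hεdef
    have hεpos : 0 < ε := by
      apply lt_min (lt_min (by linarith) (by linarith)) one_pos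
    refine ⟨ε, hεpos, ?_⟩
    intro s hs
    have hsabs : |s| ≤ ε := abs_le.2 ⟨hs.1, hs.2⟩
    have hε1 : ε ≤ 1 := min_le_right _ _
    have hεu : ε ≤ δu/2 := le_trans (min_le_left _ _) (min_le_left _ _)
    have hεw : ε ≤ δw/2 := le_trans (min_le_left _ _) (min_le_right _ _)
    -- goal membership
    show qVec A0 b0 c0 A b c (p + s • d).1 - (2 * (p + s • d).2) • e0 ∈ polarCone (Gamma A0 A)
    have hfst : (p + s • d).1 = p.1 + s • d.1 := rfl
    have hsnd : (p + s • d).2 = p.2 + s * d.2 := rfl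
    rw [hfst, hsnd, hkey s]
    have hmemU : v0 + (2*s) • (u1 - u2) ∈ polarCone (Gamma A0 A) := by
      refine step δu hδu u1 hu1 u2 hu2 hδuK (2*s) ?_
      rw [abs_mul]
      have : |(2:ℝ)| = 2 := by norm_num
      rw [this]
      linarith [hsabs, hεu]
    have hmemW : v0 + (2*s^2) • (w1 - w2) ∈ polarCone (Gamma A0 A) := by
      refine step δw hδw w1 hw1 w2 hw2 hδwK (2*s^2) ?_
      have hs2 : s^2 ≤ |s| := by
        nlinarith [sq_abs s, abs_nonneg s, hsabs, hε1]
      rw [abs_of_nonneg (by positivity)]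
      linarith [hsabs, hεw]
    have hid2 : v0 + s • U + s^2 • W =
        (1/2 : ℝ) • (v0 + (2*s) • (u1 - u2)) + (1/2 : ℝ) • (v0 + (2*s^2) • (w1 - w2)) := by
      rw [hUeq, hWeq]; module
    rw [hid2]
    exact mem_polar_add (mem_polar_smul (by norm_num) hmemU)
      (mem_polar_smul (by norm_num) hmemW)
  · -- R ⊆ R'
    intro hd
    obtain ⟨ε, hε, hR⟩ := hd
    have hεne : ε ≠ 0 := ne_of_gt hε
    have hVK : ∀ s : ℝ, s ∈ Set.Icc (-ε) ε →
        v0 + s • U + s^2 • W ∈ polarCone (Gamma A0 A) := by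
      intro s hs
      have := hR s hs
      have hfst : (p + s • d).1 = p.1 + s • d.1 := rfl
      have hsnd : (p + s • d).2 = p.2 + s * d.2 := rfl
      change SSDP A0 b0 c0 A b c (p + s • d) at this
      change qVec A0 b0 c0 A b c (p + s • d).1 - (2 * (p + s • d).2) • e0
        ∈ polarCone (Gamma A0 A) at this
      rw [hfst, hsnd, hkey s] at this
      exact this
    have hVp := hVK ε ⟨by linarith, le_refl ε⟩
    have hVm := hVK (-ε) ⟨le_refl _, by linarith⟩
    -- values against w0
    set a : ℝ := ipr U w0 with hadef
    set q : ℝ := ipr W w0 with hqdef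
    have hq0 : 0 ≤ q := hWpos w0 hw0Γ
    have hiprp : ipr (v0 + ε • U + ε^2 • W) w0 = ε * a + ε^2 * q := by
      rw [ipr_add_left, ipr_add_left, ipr_smul_left, ipr_smul_left, hv0w0]; ring
    have hiprm : ipr (v0 + (-ε) • U + (-ε)^2 • W) w0 = -(ε * a) + ε^2 * q := by
      rw [ipr_add_left, ipr_add_left, ipr_smul_left, ipr_smul_left, hv0w0]; ring
    have hp' : ε * a + ε^2 * q ≤ 0 := hiprp ▸ hVp w0 hw0Γ
    have hm' : -(ε * a) + ε^2 * q ≤ 0 := hiprm ▸ hVm w0 hw0Γ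
    have hqz : q = 0 := le_antisymm (by nlinarith [pow_pos hε 2]) hq0
    have hεa : ε * a = 0 := by nlinarith
    have haz : a = 0 := by
      rcases mul_eq_zero.mp hεa with h | h
      · exact absurd h hεne
      · exact h
    -- membership in G of the relevant points
    have hnegWG : -W ∈ G := by
      rw [hGw]
      exact ⟨hnegWK, show ipr (-W) w0 = 0 by rw [ipr_neg_left, ← hqdef, hqz, neg_zero]⟩
    have hvεG : v0 + ε • U + ε^2 • W ∈ G := by
      rw [hGw]
      exact ⟨hVp, show ipr (v0 + ε • U + ε^2 • W) w0 = 0 by rw [hiprp, haz, hqz]; ring⟩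
    have hWS : W ∈ Submodule.span ℝ G := by
      have : W = -(-W) := by module
      rw [this]
      exact Submodule.neg_mem _ (Submodule.subset_span hnegWG)
    have hv0S : v0 ∈ Submodule.span ℝ G := Submodule.subset_span hv0G
    have hUS : U ∈ Submodule.span ℝ G := by
      have heq : U = ε⁻¹ • ((v0 + ε • U + ε^2 • W) - v0 + (ε^2) • (-W)) := by
        match_scalars <;> field_simp <;> ring
      rw [heq]
      refine Submodule.smul_mem _ _ (Submodule.add_mem _
        (Submodule.sub_mem _ (Submodule.subset_span hvεG) hv0S)
        (Submodule.smul_mem _ _ (Submodule.subset_span hnegWG)))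
    intro α
    rw [hkey α]
    exact Submodule.add_mem _ (Submodule.add_mem _ hv0S (Submodule.smul_mem _ _ hUS))
      (Submodule.smul_mem _ _ hWS)
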